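/- Let λ ∈ ℝ be a root of P(λ) = ((λ - u_n)² - cρ_n^{2/3} - 2αρ_n)((λ - u_s)² - (α/2)ρ_s) - α²ρ_nρ_s. Then the vector X = ((λ-u_s)² - (α/2)ρ_s, αρ_s, (1/ρ_n)(λ-u_n)((λ-u_s)² - (α/2)ρ_s), α(λ-u_s)) satisfies A X = λ X, where A is the matrix with rows (u_n, 0, ρ_n, 0), (0, u_s, 0, ρ_s), (cρ_n^{-1/3} + 2α, α, u_n, 0), (α, α/2, 0, u_s). -/

import Mathlib

theorem stmt_14 (ρ_n ρ_s α c u_n u_s : ℝ) (hρn : 0 < ρ_n) (hρs : 0 < ρ_s)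
    (hα : 0 < α) (hc : 0 < c) (l : ℝ)
    (hroot : ((l - u_n) ^ 2 - c * ρ_n ^ ((2 : ℝ) / 3) - 2 * α * ρ_n) *
        ((l - u_s) ^ 2 - α / 2 * ρ_s) - α ^ 2 * ρ_n * ρ_s = 0)
    (A : Matrix (Fin 4) (Fin 4) ℝ)
    (hA : A = !![u_n, 0, ρ_n, 0;
                 0, u_s, 0, ρ_s;
                 c * ρ_n ^ (-(1 : ℝ) / 3) + 2 * α, α, u_n, 0;
                 α, α / 2, 0, u_s])
    (X : Fin 4 → ℝ)
    (hX : X = ![(l - u_s) ^ 2 - α / 2 * ρ_s,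
                α * ρ_s,
                (1 / ρ_n) * (l - u_n) * ((l - u_s) ^ 2 - α / 2 * ρ_s),
                α * (l - u_s)]) :
    A.mulVec X = l • X := by
  have hne : ρ_n ≠ 0 := hρn.ne'
  have key : ρ_n ^ (-(1 : ℝ) / 3) * ρ_n = ρ_n ^ ((2 : ℝ) / 3) := by
    rw [show ((2 : ℝ) / 3) = -(1 : ℝ) / 3 + 1 by norm_num, Real.rpow_add hρn,
      Real.rpow_one]
  subst hA hX
  funext i
  fin_cases i
  · simp [Matrix.mulVec, dotProduct, Fin.sum_univ_four]
    field_simp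
    ring
  · simp [Matrix.mulVec, dotProduct, Fin.sum_univ_four]
    ring
  · simp [Matrix.mulVec, dotProduct, Fin.sum_univ_four]
    field_simp
    rw [show (-(1:ℝ)/3) = -(1/3) by ring] at key
    linear_combination (-2) * hroot +
      2 * c * ((l - u_s) ^ 2 - α / 2 * ρ_s) * key
  · simp [Matrix.mulVec, dotProduct, Fin.sum_univ_four]
    ring
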